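/- Sufficiency direction of the ESPC theorem: if there exist finite α* ≥ 0 and β* ≥ 0 such that for all α** > α* and β** > β* (componentwise) the extended saddle-point condition L_m(z*, α, β) ≤ L_m(z*, α**, β**) ≤ L_m(z, α**, β**) holds for all z ∈ N(z*), all α ∈ ℝ^m_{≥0}, and all β ∈ ℝ^r_{≥0}, then z* is a constrained local minimum of P_m with respect to N(z*): z* is feasible and f(z*) ≤ f(z) for all feasible z ∈ N(z*). -/

import Mathlib

open Finset in
/-- The ℓ1-penalty function. -/
noncomputable def Lm {Z : Type*} {m r : ℕ} (f : Z → ℝ) (h : Z → Fin m → ℝ) (g : Z → Fin r → ℝ)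
    (z : Z) (α : Fin m → ℝ) (β : Fin r → ℝ) : ℝ :=
  f z + ∑ i, α i * |h z i| + ∑ j, β j * max 0 (g z j)

/-- Sufficiency direction of the ESPC theorem. -/
theorem espc_sufficient {Z : Type*} {m r : ℕ} (f : Z → ℝ) (h : Z → Fin m → ℝ)
    (g : Z → Fin r → ℝ) (zstar : Z) (N : Set Z)
    (hbdd : BddBelow (Set.range f))
    (αstar : Fin m → ℝ) (βstar : Fin r → ℝ)
    (hαstar : ∀ i, 0 ≤ αstar i) (hβstar : ∀ j, 0 ≤ βstar j)
    (hespc : ∀ (αss : Fin m → ℝ) (βss : Fin r → ℝ),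
      (∀ i, αstar i < αss i) → (∀ j, βstar j < βss j) →
      (∀ (α : Fin m → ℝ) (β : Fin r → ℝ), (∀ i, 0 ≤ α i) → (∀ j, 0 ≤ β j) →
        Lm f h g zstar α β ≤ Lm f h g zstar αss βss) ∧
      (∀ z ∈ N, Lm f h g zstar αss βss ≤ Lm f h g z αss βss)) :
    ((∀ i, h zstar i = 0) ∧ (∀ j, g zstar j ≤ 0)) ∧
      (∀ z ∈ N, (∀ i, h z i = 0) → (∀ j, g z j ≤ 0) → f zstar ≤ f z) := by
  set αss : Fin m → ℝ := fun i => αstar i + 1 with hαss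
  set βss : Fin r → ℝ := fun j => βstar j + 1 with hβss
  have hαlt : ∀ i, αstar i < αss i := fun i => by simp [hαss]
  have hβlt : ∀ j, βstar j < βss j := fun j => by simp [hβss]
  have hαpos : ∀ i, (0:ℝ) ≤ αss i := fun i => by have := hαstar i; simp [hαss]; linarith
  have hβpos : ∀ j, (0:ℝ) ≤ βss j := fun j => by have := hβstar j; simp [hβss]; linarith
  obtain ⟨H1, H2⟩ := hespc αss βss hαlt hβlt
  have hfeas_h : ∀ i, h zstar i = 0 := by
    intro i₀
    by_contra hne
    have habs : 0 < |h zstar i₀| := abs_pos.mpr hne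
    have := H1 (fun i => αss i + if i = i₀ then 1 else 0) βss
      (fun i => by have := hαpos i; split <;> linarith) hβpos
    simp only [Lm, add_mul, ite_mul, one_mul, zero_mul, Finset.sum_add_distrib,
      Finset.sum_ite_eq'] at this
    simp at this
    exact hne this
  have hfeas_g : ∀ j, g zstar j ≤ 0 := by
    intro j₀
    by_contra hne
    push_neg at hne
    have hmax : max 0 (g zstar j₀) = g zstar j₀ := max_eq_right hne.le
    have := H1 αss (fun j => βss j + if j = j₀ then 1 else 0) hαpos
      (fun j => by have := hβpos j; split <;> linarith)
    simp only [Lm, add_mul, ite_mul, one_mul, zero_mul, Finset.sum_add_distrib,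
      Finset.sum_ite_eq'] at this
    simp [hmax] at this
    linarith
  refine ⟨⟨hfeas_h, hfeas_g⟩, ?_⟩
  intro z hz hhz hgz
  have h1 : Lm f h g zstar αss βss = f zstar := by
    simp [Lm, hfeas_h, fun j => max_eq_left (hfeas_g j)]
  have h2 : Lm f h g z αss βss = f z := by
    simp [Lm, hhz, fun j => max_eq_left (hgz j)]
  have := H2 z hz
  rw [h1, h2] at this
  exact this
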